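/- Let A : X → Y be a surjective linear map between finite-dimensional real inner product spaces and v ∈ Y with A*[v] ≠ 0. Let λ_min > 0 be the smallest eigenvalue of the self-adjoint operator A∘A*. Then the Cauchy step Δ = −(‖A*[v]‖²/‖A∘A*[v]‖²)·A*[v] satisfies ‖Δ‖ ≤ λ_min^{−1/2} ‖v‖. -/
import Mathlib

open scoped RealInnerProductSpace

lemma key_spectral {Y : Type*} [NormedAddCommGroup Y] [InnerProductSpace ℝ Y]
    [FiniteDimensional ℝ Y]
    (T : Y →L[ℝ] Y) (hT : (T.toLinearMap).IsSymmetric) (lam : ℝ) (hlam0 : 0 ≤ lam)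
    (hlow : ∀ μ : ℝ, Module.End.HasEigenvalue (T.toLinearMap) μ → lam ≤ μ)
    (v : Y) : lam * ⟪v, T v⟫ ≤ ‖T v‖ ^ 2 := by
  set n := Module.finrank ℝ Y with hn
  set b := hT.eigenvectorBasis hn.symm with hb
  set μ := hT.eigenvalues hn.symm with hμ
  have hbi : ∀ i, T (b i) = μ i • b i := fun i => hT.apply_eigenvectorBasis hn.symm i
  have hTv : ∀ i, ⟪b i, T v⟫ = μ i * ⟪b i, v⟫ := by
    intro i
    rw [show (⟪b i, T v⟫ : ℝ) = ⟪T.toLinearMap (b i), v⟫ from (hT (b i) v).symm]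
    show (⟪T (b i), v⟫ : ℝ) = _
    rw [hbi i, real_inner_smul_left]
  have h1 : ⟪v, T v⟫ = ∑ i, μ i * ⟪b i, v⟫ ^ 2 := by
    rw [← b.sum_inner_mul_inner v (T v)]
    apply Finset.sum_congr rfl
    intro i _
    rw [hTv i, real_inner_comm v (b i)]; ring
  have h2 : ‖T v‖ ^ 2 = ∑ i, (μ i)^2 * ⟪b i, v⟫ ^ 2 := by
    rw [← real_inner_self_eq_norm_sq, ← b.sum_inner_mul_inner (T v) (T v)]
    apply Finset.sum_congr rfl
    intro i _
    rw [real_inner_comm (b i) (T v), hTv i]; ring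
  rw [h1, h2, Finset.mul_sum]
  apply Finset.sum_le_sum
  intro i _
  have hμi : lam ≤ μ i := hlow _ (hT.hasEigenvalue_eigenvalues hn.symm i)
  have hμ0 : 0 ≤ μ i := hlam0.trans hμi
  have h : lam * μ i ≤ μ i ^ 2 := by nlinarith
  nlinarith [mul_le_mul_of_nonneg_right h (sq_nonneg (⟪b i, v⟫ : ℝ))]

theorem stmt_8 {X Y : Type*}
    [NormedAddCommGroup X] [InnerProductSpace ℝ X] [FiniteDimensional ℝ X]
    [NormedAddCommGroup Y] [InnerProductSpace ℝ Y] [FiniteDimensional ℝ Y]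
    (A : X →L[ℝ] Y) (hA : Function.Surjective A)
    (v : Y) (hv : ContinuousLinearMap.adjoint A v ≠ 0) (lamMin : ℝ)
    (hlam : IsLeast {μ : ℝ |
        Module.End.HasEigenvalue ((A ∘L ContinuousLinearMap.adjoint A).toLinearMap) μ} lamMin) :
    let g := ContinuousLinearMap.adjoint A v
    ‖-(‖g‖ ^ 2 / ‖A g‖ ^ 2) • g‖ ≤ lamMin ^ (-(1 / 2 : ℝ)) * ‖v‖ := by
  intro g
  set T : Y →L[ℝ] Y := A ∘L ContinuousLinearMap.adjoint A with hTdef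
  have hTsa : IsSelfAdjoint T := by
    rw [IsSelfAdjoint, ContinuousLinearMap.star_eq_adjoint, hTdef,
      ContinuousLinearMap.adjoint_comp, ContinuousLinearMap.adjoint_adjoint]
  have hTsym : (T.toLinearMap).IsSymmetric := hTsa.isSymmetric
  -- adjoint injective
  have hinj : ∀ w : Y, ContinuousLinearMap.adjoint A w = 0 → w = 0 := by
    intro w hw
    have h0 : ∀ y : Y, ⟪w, y⟫ = 0 := by
      intro y
      obtain ⟨x, rfl⟩ := hA y
      rw [← ContinuousLinearMap.adjoint_inner_left, hw, inner_zero_left]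
    exact inner_self_eq_zero.mp (h0 w)
  have hform : ∀ w : Y, ⟪w, T w⟫ = ‖ContinuousLinearMap.adjoint A w‖ ^ 2 := by
    intro w
    have : T w = A (ContinuousLinearMap.adjoint A w) := rfl
    rw [this, ← ContinuousLinearMap.adjoint_inner_left, real_inner_self_eq_norm_sq]
  -- lamMin > 0
  have hlampos : 0 < lamMin := by
    obtain ⟨w, hw⟩ := hlam.1.exists_hasEigenvector
    have hw0 : w ≠ 0 := hw.right
    have hwT : T w = lamMin • w := hw.apply_eq_smul
    have hq : ⟪w, T w⟫ = lamMin * ‖w‖ ^ 2 := by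
      rw [hwT, real_inner_smul_right, real_inner_self_eq_norm_sq]
    have hgw : ContinuousLinearMap.adjoint A w ≠ 0 := fun h => hw0 (hinj w h)
    have h1 : 0 < ‖ContinuousLinearMap.adjoint A w‖ ^ 2 := by
      have := norm_pos_iff.mpr hgw; positivity
    rw [← hform w, hq] at h1
    have h2 : 0 < ‖w‖ ^ 2 := by
      have := norm_pos_iff.mpr hw0; positivity
    nlinarith [h1, h2]
  -- main quantities
  have hAgTv : A g = T v := rfl
  set a := ‖g‖ with ha
  set t := ‖T v‖ with ht
  set nv := ‖v‖ with hnv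
  have hq : (⟪v, T v⟫ : ℝ) = a ^ 2 := hform v
  have ha0 : 0 < a := norm_pos_iff.mpr hv
  have hv0 : v ≠ 0 := by
    intro h; apply hv; rw [h]; simp
  have hnv0 : 0 < nv := norm_pos_iff.mpr hv0
  have hCS : a ^ 2 ≤ nv * t := by
    rw [← hq]; exact real_inner_le_norm v (T v)
  have hlowkey : lamMin * a ^ 2 ≤ t ^ 2 := by
    rw [← hq]
    exact key_spectral T hTsym lamMin hlampos.le (fun μ hμ => hlam.2 hμ) v
  have ht0 : 0 < t := by nlinarith
  set r := Real.sqrt lamMin with hr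
  have hr0 : 0 < r := Real.sqrt_pos.mpr hlampos
  have hr2 : r ^ 2 = lamMin := Real.sq_sqrt hlampos.le
  have hrpow : lamMin ^ (-(1 / 2 : ℝ)) = r⁻¹ := by
    rw [Real.rpow_neg hlampos.le, hr, Real.sqrt_eq_rpow]
  -- scalar inequality
  have hmain : r * a ^ 3 ≤ nv * t ^ 2 := by
    have h4 : a ^ 2 * a ^ 2 ≤ (nv * t) * (nv * t) :=
      mul_le_mul hCS hCS (by positivity) (by positivity)
    have h3 : r ^ 2 * a ^ 6 ≤ nv ^ 2 * t ^ 4 := by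
      rw [hr2]
      nlinarith [mul_le_mul hlowkey h4 (by positivity : (0:ℝ) ≤ a ^ 2 * a ^ 2)
        (by positivity : (0:ℝ) ≤ t ^ 2)]
    nlinarith [sq_nonneg (r * a ^ 3 - nv * t ^ 2), mul_pos hnv0 (pow_pos ht0 2)]
  -- finish
  have goal2 : (a ^ 2 / t ^ 2) * a ≤ r⁻¹ * nv := by
    have h6 : (a ^ 2 / t ^ 2) * a = (a ^ 2 * a) / t ^ 2 := by ring
    have h7 : r⁻¹ * nv = nv / r := by ring
    rw [h6, h7, div_le_div_iff₀ (by positivity) hr0]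
    nlinarith [hmain]
  rw [norm_smul, Real.norm_eq_abs, abs_neg, abs_of_nonneg (by positivity), hrpow, hAgTv]
  exact goal2
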